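/- Let A be a prolongable monomial algebra on alphabet Σ = {x_1, …, x_m} over a field F, and suppose that for every n ∈ ℕ there exists a tree (C_i)_{i≥0} over A that is n-maximal, i.e., every tree (C'_i)_{i≥0} over A satisfies C'_i ⊆ C_i for all 0 ≤ i ≤ n. Then there exists a subset S ⊆ Σ such that the two-sided ideal N of A generated by S is nilpotent and A/N is isomorphic to the free algebra F⟨Σ∖S⟩ on the remaining generators. -/

import Mathlib

noncomputable section

open scoped BigOperators

/-- The free associative `F`-algebra on `m` generators, realized as the monoid
algebra of the free monoid on `Fin m`. -/
abbrev FreeAlg (F : Type) [Field F] (m : ℕ) : Type :=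
  MonoidAlgebra F (FreeMonoid (Fin m))

variable (F : Type) [Field F] {m : ℕ}

/-- The element of the free algebra corresponding to a word `u`. -/
def wordElem (u : List (Fin m)) : FreeAlg F m :=
  MonoidAlgebra.of F (FreeMonoid (Fin m)) (FreeMonoid.ofList u)

/-- The relation identifying the forbidden words in `W` with `0`. -/
def monRel (W : Set (List (Fin m))) : FreeAlg F m → FreeAlg F m → Prop :=
  fun a b => (∃ u ∈ W, a = wordElem F u) ∧ b = 0

/-- The monomial algebra `F⟨x_1,…,x_m⟩/⟨W⟩` determined by the set `W` of forbidden
words. -/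
abbrev MonAlg (W : Set (List (Fin m))) : Type :=
  RingQuot (monRel F W)

/-- The canonical projection from the free algebra onto the monomial algebra. -/
def monAlgPi (W : Set (List (Fin m))) : FreeAlg F m →ₐ[F] MonAlg F W :=
  RingQuot.mkAlgHom F (monRel F W)

/-- The image of the word `u` in the monomial algebra; `u` is a *nonzero monomial*
of the monomial algebra iff `mono F W u ≠ 0`. -/
def mono (W : Set (List (Fin m))) (u : List (Fin m)) : MonAlg F W :=
  monAlgPi F W (wordElem F u)

/-- The degree-`d` homogeneous component of the monomial algebra, spanned by the
images of the words of length `d`. -/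
def homog (W : Set (List (Fin m))) (d : ℕ) : Submodule F (MonAlg F W) :=
  Submodule.span F { a | ∃ u : List (Fin m), u.length = d ∧ a = mono F W u }
/-- The right prolongable radical of a graded algebra `A` with grading `𝒜`:
the set of `f ∈ A` with `f · A_d = 0` for some `d ≥ 1`. -/
def proSet (A : Type) [Ring A] [Algebra F A] (𝒜 : ℕ → Submodule F A) : Set A :=
  { f | ∃ d : ℕ, 1 ≤ d ∧ ∀ g ∈ 𝒜 d, f * g = 0 }

/-- The left prolongable radical of a graded algebra `A` with grading `𝒜`:
the set of `f ∈ A` with `A_d · f = 0` for some `d ≥ 1`. -/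
def proSetLeft (A : Type) [Ring A] [Algebra F A] (𝒜 : ℕ → Submodule F A) : Set A :=
  { f | ∃ d : ℕ, 1 ≤ d ∧ ∀ g ∈ 𝒜 d, g * f = 0 }

/-- A monomial algebra is (right) prolongable if every nonzero monomial has a
nonzero proper right prolongation. -/
def Prolongable (W : Set (List (Fin m))) : Prop :=
  ∀ u : List (Fin m), mono F W u ≠ 0 → ∃ v : List (Fin m), v ≠ [] ∧ mono F W (u ++ v) ≠ 0
/-- The word `u`, read starting at position `i`, selects its letters from the
sequence of sets `C`. -/
def SelectsFrom (C : ℕ → Set (Fin m)) (i : ℕ) (u : List (Fin m)) : Prop :=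
  ∀ (k : ℕ) (h : k < u.length), u.get ⟨k, h⟩ ∈ C (i + k)

/-- A tree over the monomial algebra with forbidden words `W`: a sequence of
nonempty subsets of the alphabet all of whose "segment words" are nonzero
monomials of the algebra. -/
def IsTree (W : Set (List (Fin m))) (C : ℕ → Set (Fin m)) : Prop :=
  (∀ i, (C i).Nonempty) ∧
    ∀ (i : ℕ) (u : List (Fin m)), SelectsFrom C i u → mono F W u ≠ 0


open scoped Classical

section Aux

theorem wordElem_append (u v : List (Fin m)) :
    wordElem F (u ++ v) = wordElem F u * wordElem F v := by
  unfold wordElem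
  rw [← map_mul]
  rfl

theorem mono_append (W : Set (List (Fin m))) (u v : List (Fin m)) :
    mono F W (u ++ v) = mono F W u * mono F W v := by
  unfold mono
  rw [wordElem_append, map_mul]

theorem mono_nil (W : Set (List (Fin m))) : mono F W [] = 1 := by
  unfold mono wordElem
  have : FreeMonoid.ofList ([] : List (Fin m)) = 1 := rfl
  rw [this, map_one, map_one]

theorem mono_mem_zero (W : Set (List (Fin m))) {w : List (Fin m)} (hw : w ∈ W) :
    mono F W w = 0 := by
  have : monRel F W (wordElem F w) 0 := ⟨⟨w, hw, rfl⟩, rfl⟩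
  have h2 := RingQuot.mkAlgHom_rel F this
  simpa [mono, monAlgPi] using h2

theorem mono_factor_zero (W : Set (List (Fin m))) {u : List (Fin m)} (hu : mono F W u = 0)
    (x y : List (Fin m)) : mono F W (x ++ u ++ y) = 0 := by
  rw [mono_append, mono_append, hu, mul_zero, zero_mul]

theorem span_mono_top (W : Set (List (Fin m))) :
    Submodule.span F {a | ∃ u : List (Fin m), a = mono F W u} = ⊤ := by
  rw [Submodule.eq_top_iff']
  intro x
  obtain ⟨y, rfl⟩ := RingQuot.mkAlgHom_surjective F (monRel F W) x
  induction y using MonoidAlgebra.induction_on with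
  | of g =>
    exact Submodule.subset_span ⟨g.toList, by simp [mono, monAlgPi, wordElem]⟩
  | add f g hf hg => rw [map_add]; exact Submodule.add_mem _ hf hg
  | smul r f hf => rw [map_smul]; exact Submodule.smul_mem _ _ hf

section Trees

variable {F}
variable {W : Set (List (Fin m))}
variable (hmax : ∀ n : ℕ, ∃ C : ℕ → Set (Fin m), IsTree F W C ∧
        ∀ C' : ℕ → Set (Fin m), IsTree F W C' → ∀ i ≤ n, C' i ⊆ C i)

/-- The maximal tree. -/
def Cmax (i : ℕ) : Set (Fin m) := (hmax i).choose i

theorem Cmax_agree {n i : ℕ} (hi : i ≤ n) : (hmax n).choose i = Cmax hmax i := by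
  apply Set.Subset.antisymm
  · exact (hmax i).choose_spec.2 _ (hmax n).choose_spec.1 i le_rfl
  · exact (hmax n).choose_spec.2 _ (hmax i).choose_spec.1 i hi

theorem Cmax_tree : IsTree F W (Cmax hmax) := by
  constructor
  · intro i; exact (hmax i).choose_spec.1.1 i
  · intro i u hsel
    refine (hmax (i + u.length)).choose_spec.1.2 i u ?_
    intro k hk
    rw [Cmax_agree hmax (by omega)]
    exact hsel k hk

theorem Cmax_max (C' : ℕ → Set (Fin m)) (hC' : IsTree F W C') (i : ℕ) :
    C' i ⊆ Cmax hmax i :=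
  (hmax i).choose_spec.2 C' hC' i le_rfl

theorem Cmax_antitone {i j : ℕ} (hij : i ≤ j) : Cmax hmax j ⊆ Cmax hmax i := by
  induction j with
  | zero =>
    have : i = 0 := by omega
    subst this; exact subset_rfl
  | succ n ih =>
    rcases Nat.lt_or_ge i (n+1) with h | h
    · refine subset_trans ?_ (ih (by omega))
      have : IsTree F W (fun k => Cmax hmax (k + 1)) := by
        refine ⟨fun k => (Cmax_tree hmax).1 (k+1), ?_⟩
        intro i' u hsel
        refine (Cmax_tree hmax).2 (i' + 1) u ?_
        intro k hk
        have h1 := hsel k hk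
        have heq : i' + 1 + k = i' + k + 1 := by omega
        rw [heq]
        exact h1
      exact Cmax_max hmax _ this n
    · have : i = n + 1 := by omega
      subst this; exact subset_rfl

theorem Cmax_stab : ∃ n0 : ℕ, ∀ i, n0 ≤ i → Cmax hmax i = Cmax hmax n0 := by
  set f : ℕ → ℕ := fun i => (Cmax hmax i).ncard with hf
  have hne : (Set.range f).Nonempty := ⟨f 0, ⟨0, rfl⟩⟩
  obtain ⟨n0, hn0⟩ := Nat.sInf_mem hne
  refine ⟨n0, fun i hi => ?_⟩
  have hsub : Cmax hmax i ⊆ Cmax hmax n0 := Cmax_antitone hmax hi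
  refine Set.eq_of_subset_of_ncard_le hsub ?_ (Set.toFinite _)
  show f n0 ≤ f i
  rw [hn0]
  exact Nat.sInf_le ⟨i, rfl⟩
end Trees

section Ext
variable {F}
variable {W : Set (List (Fin m))} (hpro : Prolongable F W)

/-- Iterated prolongation of a nonzero word. -/
def ExtW (u : List (Fin m)) (h : mono F W u ≠ 0) : ℕ → {v : List (Fin m) // mono F W v ≠ 0}
  | 0 => ⟨u, h⟩
  | n+1 =>
    let p := ExtW u h n
    ⟨p.1 ++ (hpro p.1 p.2).choose, (hpro p.1 p.2).choose_spec.2⟩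

theorem ExtW_prefix (u : List (Fin m)) (h : mono F W u ≠ 0) {i j : ℕ} (hij : i ≤ j) :
    (ExtW hpro u h i).1 <+: (ExtW hpro u h j).1 := by
  induction j with
  | zero => have : i = 0 := by omega
            subst this; exact List.prefix_rfl
  | succ n ih =>
    rcases Nat.lt_or_ge i (n+1) with h' | h'
    · exact (ih (by omega)).trans ⟨_, rfl⟩
    · have : i = n + 1 := by omega
      subst this; exact List.prefix_rfl

theorem ExtW_len (u : List (Fin m)) (h : mono F W u ≠ 0) (n : ℕ) :
    u.length + n ≤ (ExtW hpro u h n).1.length := by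
  induction n with
  | zero => simp [ExtW]
  | succ n ih =>
    have hne := (hpro (ExtW hpro u h n).1 (ExtW hpro u h n).2).choose_spec.1
    have : 1 ≤ (hpro (ExtW hpro u h n).1 (ExtW hpro u h n).2).choose.length :=
      List.length_pos_iff.mpr hne
    show u.length + (n+1) ≤ ((ExtW hpro u h n).1 ++ _).length
    rw [List.length_append]
    omega

/-- The infinite word extending a nonzero word `u`. -/
def InfExt (u : List (Fin m)) (h : mono F W u ≠ 0) (i : ℕ) : Fin m :=
  (ExtW hpro u h (i+1)).1.get ⟨i, by have := ExtW_len hpro u h (i+1); omega⟩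

theorem InfExt_eq (u : List (Fin m)) (h : mono F W u ≠ 0) {N i : ℕ}
    (hN : i + 1 ≤ N) (hlen : i < (ExtW hpro u h N).1.length) :
    (ExtW hpro u h N).1.get ⟨i, hlen⟩ = InfExt hpro u h i := by
  have hp := ExtW_prefix hpro u h hN
  unfold InfExt
  rw [List.get_eq_getElem, List.get_eq_getElem]
  exact (List.IsPrefix.getElem hp _).symm

theorem InfExt_eq_u (u : List (Fin m)) (h : mono F W u ≠ 0) {k : ℕ} (hk : k < u.length) :
    u.get ⟨k, hk⟩ = InfExt hpro u h k := by
  have hp : (ExtW hpro u h 0).1 <+: (ExtW hpro u h (k+1)).1 := ExtW_prefix hpro u h (by omega)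
  unfold InfExt
  rw [List.get_eq_getElem, List.get_eq_getElem]
  exact List.IsPrefix.getElem hp _

/-- The singleton tree built from a nonzero word. -/
theorem InfExt_tree (u : List (Fin m)) (h : mono F W u ≠ 0) :
    IsTree F W (fun i => {InfExt hpro u h i}) := by
  constructor
  · intro i; exact ⟨_, rfl⟩
  · intro i v hsel
    set N := i + v.length with hNdef
    have hlenN : i + v.length ≤ (ExtW hpro u h N).1.length := by
      have := ExtW_len hpro u h N; omega
    set L := (ExtW hpro u h N).1 with hL
    have hveq : v = (L.drop i).take v.length := by
      apply List.ext_getElem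
      · rw [List.length_take, List.length_drop]; omega
      · intro k hk1 hk2
        have hk : k < v.length := hk1
        have := hsel k hk
        rw [Set.mem_singleton_iff] at this
        rw [List.getElem_take, List.getElem_drop]
        have hik : i + k < L.length := by omega
        have := InfExt_eq hpro u h (N := N) (i := i + k) (by omega) hik
        rw [List.get_eq_getElem] at this
        rw [this]
        have h2 := hsel k hk
        rw [Set.mem_singleton_iff, List.get_eq_getElem] at h2
        exact h2
    intro hv0
    apply (ExtW hpro u h N).2
    have hdecomp : L = L.take i ++ ((L.drop i).take v.length ++ (L.drop i).drop v.length) := by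
      rw [List.take_append_drop, List.take_append_drop]
    calc mono F W L = mono F W (L.take i) * (mono F W ((L.drop i).take v.length)
          * mono F W ((L.drop i).drop v.length)) := by
            rw [← mono_append, ← mono_append, ← hdecomp]
      _ = 0 := by rw [← hveq, hv0, zero_mul, mul_zero]
end Ext

section ISO

variable {F}
variable {W : Set (List (Fin m))} (S : Set (Fin m))

def W' (S : Set (Fin m)) : Set (List (Fin m)) :=
  W ∪ { u : List (Fin m) | ∃ j ∈ S, u = [j] }

def fn : Fin m → FreeAlgebra F { j : Fin m // j ∉ S } := fun j =>
  if h : j ∈ S then 0 else FreeAlgebra.ι F ⟨j, h⟩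

def φ : FreeAlg F m →ₐ[F] FreeAlgebra F { j : Fin m // j ∉ S } :=
  MonoidAlgebra.lift F _ (FreeMonoid (Fin m)) (FreeMonoid.lift (fn S))

theorem φ_wordElem (u : List (Fin m)) :
    φ S (wordElem F u) = (u.map (fn S)).prod := by
  unfold φ wordElem
  rw [MonoidAlgebra.lift_of, FreeMonoid.lift_ofList]

theorem φ_rel (hW : ∀ w ∈ W, ∃ j ∈ S, j ∈ w) : ∀ ⦃a b : FreeAlg F m⦄, monRel F (W' (W := W) S) a b → φ S a = φ S b := by
  rintro a b ⟨⟨u, hu, rfl⟩, rfl⟩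
  rw [map_zero, φ_wordElem]
  rcases hu with hu | ⟨j, hj, rfl⟩
  · obtain ⟨j, hjS, hjw⟩ := hW u hu
    apply List.prod_eq_zero
    refine List.mem_map.mpr ⟨j, hjw, ?_⟩
    simp [fn, hjS]
  · simp [fn, hj]

def fwd (hW : ∀ w ∈ W, ∃ j ∈ S, j ∈ w) : MonAlg F (W' (W := W) S) →ₐ[F] FreeAlgebra F { j : Fin m // j ∉ S } :=
  RingQuot.liftAlgHom F ⟨φ S, φ_rel S hW⟩

def bwd : FreeAlgebra F { j : Fin m // j ∉ S } →ₐ[F] MonAlg F (W' (W := W) S) :=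
  FreeAlgebra.lift F fun j => mono F (W' (W := W) S) [j.1]

theorem fwd_mono (hW : ∀ w ∈ W, ∃ j ∈ S, j ∈ w) (u : List (Fin m)) :
    fwd S hW (mono F (W' (W := W) S) u) = (u.map (fn S)).prod := by
  unfold fwd mono monAlgPi
  rw [RingQuot.liftAlgHom_mkAlgHom_apply, φ_wordElem]

theorem iso (hW : ∀ w ∈ W, ∃ j ∈ S, j ∈ w) : Nonempty
    (MonAlg F (W' (W := W) S) ≃ₐ[F] FreeAlgebra F { j : Fin m // j ∉ S }) := by
  refine ⟨AlgEquiv.ofAlgHom (fwd S hW) (bwd S) ?_ ?_⟩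
  · apply FreeAlgebra.hom_ext
    funext j
    show fwd S hW (bwd S (FreeAlgebra.ι F j)) = FreeAlgebra.ι F j
    rw [bwd, FreeAlgebra.lift_ι_apply, fwd_mono S hW]
    simp [fn, j.2]
  · apply RingQuot.ringQuot_ext'
    apply MonoidAlgebra.algHom_ext
    intro g
    induction g using FreeMonoid.recOn with
    | one =>
      show (bwd S).comp ((fwd S hW).comp (RingQuot.mkAlgHom F _)) _ = _
      simp only [AlgHom.comp_apply]
      have h1 : (MonoidAlgebra.single (1 : FreeMonoid (Fin m)) (1:F)) = wordElem F ([] : List (Fin m)) := rfl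
      rw [h1]
      show bwd S (fwd S hW (mono F _ [])) = _
      rw [mono_nil, map_one, map_one, AlgHom.id_apply]
      exact (mono_nil F _).symm
    | of_mul a g ihg =>
      simp only [AlgHom.comp_apply, AlgHom.id_apply] at ihg ⊢
      have hsplit : (MonoidAlgebra.single (FreeMonoid.of a * g) (1:F))
          = wordElem F [a] * MonoidAlgebra.single g (1:F) := by
        have h2 : wordElem F [a] = MonoidAlgebra.single (FreeMonoid.of a) (1:F) := rfl
        rw [h2, MonoidAlgebra.single_mul_single, one_mul]
      have hgen : bwd S (fwd S hW (mono F (W' (W := W) S) [a])) = mono F (W' (W := W) S) [a] := by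
        rw [fwd_mono S hW]
        by_cases hs : a ∈ S
        · rw [show ([a].map (fn S)).prod = (0 : FreeAlgebra F { j : Fin m // j ∉ S }) by
            simp [fn, hs]]
          rw [map_zero]
          exact (mono_mem_zero F _ (Or.inr ⟨a, hs, rfl⟩)).symm
        · rw [show ([a].map (fn S)).prod = FreeAlgebra.ι F (⟨a, hs⟩ : { j : Fin m // j ∉ S }) by
            simp [fn, hs]]
          show (FreeAlgebra.lift F fun j : { j : Fin m // j ∉ S } => mono F (W' (W := W) S) [j.1])
              (FreeAlgebra.ι F ⟨a, hs⟩) = _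
          rw [FreeAlgebra.lift_ι_apply]
      rw [hsplit, map_mul, map_mul, map_mul, ihg]
      have : (RingQuot.mkAlgHom F (monRel F (W' (W := W) S))) (wordElem F [a])
          = mono F (W' (W := W) S) [a] := rfl
      rw [this, hgen]
    exact Subsingleton.elim _ _

end ISO

section Nilp

variable {F}
variable {W : Set (List (Fin m))} (S : Set (Fin m)) (n0 : ℕ)

/-- number of S-letters. -/
def countS (u : List (Fin m)) : ℕ := (u.filter (fun a => a ∈ S)).length

theorem countS_append (u v : List (Fin m)) :
    countS S (u ++ v) = countS S u + countS S v := by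
  unfold countS
  rw [List.filter_append, List.length_append]

theorem countS_le (u : List (Fin m)) : countS S u ≤ u.length :=
  List.length_filter_le _ _

theorem key_zero (hpos : ∀ u : List (Fin m), mono F W u ≠ 0 →
    ∀ (k : ℕ) (h : k < u.length), n0 ≤ k → u.get ⟨k, h⟩ ∉ S) (u : List (Fin m)) (hu : n0 + 1 ≤ countS S u) : mono F W u = 0 := by
  by_contra h
  have hdrop : countS S (u.drop n0) = 0 := by
    unfold countS
    rw [List.length_eq_zero_iff, List.filter_eq_nil_iff]
    intro a ha
    obtain ⟨k, hk, rfl⟩ := List.getElem_of_mem ha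
    rw [List.getElem_drop]
    have hlt : n0 + k < u.length := by
      have := (List.length_drop : (u.drop n0).length = _) ▸ hk
      omega
    have := hpos u h (n0 + k) hlt (by omega)
    simpa using this
  have : countS S u ≤ n0 := by
    have h1 : countS S u = countS S (u.take n0) + countS S (u.drop n0) := by
      rw [← countS_append, List.take_append_drop]
    have h2 : countS S (u.take n0) ≤ n0 := by
      refine le_trans (countS_le S _) ?_
      rw [List.length_take]
      omega
    omega
  omega

/-- span of monos with at least r letters from S -/
def Mr (r : ℕ) : Submodule F (MonAlg F W) :=
  Submodule.span F {a | ∃ u : List (Fin m), r ≤ countS S u ∧ a = mono F W u}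

theorem Mr_zero_top : (Mr (W := W) S 0 : Submodule F (MonAlg F W)) = ⊤ := by
  rw [← span_mono_top F W]
  apply le_antisymm
  · exact le_top.trans (le_of_eq (span_mono_top F W).symm)
  · apply Submodule.span_mono
    rintro a ⟨u, rfl⟩
    exact ⟨u, Nat.zero_le _, rfl⟩

theorem Mr_mul {r s : ℕ} {x y : MonAlg F W} (hx : x ∈ Mr (W := W) S r)
    (hy : y ∈ Mr (W := W) S s) : x * y ∈ Mr (W := W) S (r + s) := by
  induction hx using Submodule.span_induction with
  | mem x hxm =>
    obtain ⟨u, hu, rfl⟩ := hxm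
    induction hy using Submodule.span_induction with
    | mem y hym =>
      obtain ⟨v, hv, rfl⟩ := hym
      refine Submodule.subset_span ⟨u ++ v, ?_, (mono_append F W u v).symm⟩
      rw [countS_append]; omega
    | zero => rw [mul_zero]; exact Submodule.zero_mem _
    | add y z _ _ hy hz => rw [mul_add]; exact Submodule.add_mem _ hy hz
    | smul c y _ hy => rw [mul_smul_comm]; exact Submodule.smul_mem _ _ hy
  | zero => rw [zero_mul]; exact Submodule.zero_mem _
  | add x z _ _ hx hz => rw [add_mul]; exact Submodule.add_mem _ hx hz
  | smul c x _ hx => rw [smul_mul_assoc]; exact Submodule.smul_mem _ _ hx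

theorem Mr_bot (hpos : ∀ u : List (Fin m), mono F W u ≠ 0 →
    ∀ (k : ℕ) (h : k < u.length), n0 ≤ k → u.get ⟨k, h⟩ ∉ S) : (Mr (W := W) S (n0 + 1) : Submodule F (MonAlg F W)) = ⊥ := by
  rw [eq_bot_iff]
  rw [Mr, Submodule.span_le]
  rintro a ⟨u, hu, rfl⟩
  simp only [SetLike.mem_coe, Submodule.mem_bot]
  exact key_zero S n0 hpos u hu

theorem factor_mem (a b : MonAlg F W) (j : Fin m) (hj : j ∈ S) :
    a * mono F W [j] * b ∈ Mr (W := W) S 1 := by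
  have ha : a ∈ Mr (W := W) S 0 := by rw [Mr_zero_top]; trivial
  have hb : b ∈ Mr (W := W) S 0 := by rw [Mr_zero_top]; trivial
  have hj' : mono F W [j] ∈ Mr (W := W) S 1 :=
    Submodule.subset_span ⟨[j], by simp [countS, hj], rfl⟩
  have := Mr_mul S (Mr_mul S ha hj') hb
  simpa using this

theorem listProd_mem (k : ℕ) (f : Fin k → MonAlg F W) (hf : ∀ t, f t ∈ Mr (W := W) S 1) :
    (List.ofFn f).prod ∈ Mr (W := W) S k := by
  induction k with
  | zero =>
    simp only [List.ofFn_zero, List.prod_nil]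
    rw [Mr_zero_top]; trivial
  | succ n ih =>
    rw [List.ofFn_succ, List.prod_cons]
    have := Mr_mul S (hf 0) (ih (fun t => f t.succ) (fun t => hf t.succ))
    convert this using 2
    omega

theorem nilp (hpos : ∀ u : List (Fin m), mono F W u ≠ 0 →
    ∀ (k : ℕ) (h : k < u.length), n0 ≤ k → u.get ⟨k, h⟩ ∉ S) : ∃ k : ℕ, 1 ≤ k ∧ ∀ (a b : Fin k → MonAlg F W) (j : Fin k → Fin m),
    (∀ t, j t ∈ S) → (List.ofFn fun t => a t * mono F W [j t] * b t).prod = 0 := by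
  refine ⟨n0 + 1, by omega, fun a b j hj => ?_⟩
  have hmem := listProd_mem S (n0 + 1) (fun t => a t * mono F W [j t] * b t)
    (fun t => factor_mem S (a t) (b t) (j t) (hj t))
  rw [Mr_bot S n0 hpos] at hmem
  simpa using hmem
end Nilp

end Aux

/-- Let `A` be a prolongable monomial algebra such that for every
`n` there is an `n`-maximal tree over `A` (this holds when the proalgebraic variety
of point modules of `A` is irreducible).  Then there is a subset `S` of the
generators such that the two-sided ideal `N` of `A` generated by `S` is nilpotent
and `A/N` is isomorphic to the free algebra on the remaining generators.  (Here
`A/N` is realized as the monomial algebra whose forbidden words are those of `A`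
together with the letters of `S`, and nilpotency of `N` is expressed by the
vanishing of all length-`k` products of elements `a·x_j·b` with `j ∈ S`.) -/
theorem statement17 (F : Type) [Field F] (m : ℕ) (W : Set (List (Fin m)))
    (hpro : Prolongable F W)
    (hmax : ∀ n : ℕ, ∃ C : ℕ → Set (Fin m), IsTree F W C ∧
        ∀ C' : ℕ → Set (Fin m), IsTree F W C' → ∀ i ≤ n, C' i ⊆ C i) :
    ∃ S : Set (Fin m),
      (∃ k : ℕ, 1 ≤ k ∧ ∀ (a b : Fin k → MonAlg F W) (j : Fin k → Fin m),
          (∀ t, j t ∈ S) →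
            (List.ofFn fun t => a t * mono F W [j t] * b t).prod = 0) ∧
      Nonempty
        (MonAlg F (W ∪ { u : List (Fin m) | ∃ j ∈ S, u = [j] }) ≃ₐ[F]
          FreeAlgebra F { j : Fin m // j ∉ S }) := by
  obtain ⟨n0, hn0⟩ := Cmax_stab hmax
  set T : Set (Fin m) := Cmax hmax n0 with hT
  refine ⟨Tᶜ, ?_, ?_⟩
  · -- nilpotency
    have hpos : ∀ u : List (Fin m), mono F W u ≠ 0 →
        ∀ (k : ℕ) (h : k < u.length), n0 ≤ k → u.get ⟨k, h⟩ ∉ Tᶜ := by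
      intro u hu k hk hn0k
      have h1 : u.get ⟨k, hk⟩ ∈ Cmax hmax k := by
        rw [InfExt_eq_u hpro u hu hk]
        exact Cmax_max hmax _ (InfExt_tree hpro u hu) k rfl
      have h2 : Cmax hmax k = T := hn0 k hn0k
      rw [h2] at h1
      exact fun hc => hc h1
    exact nilp Tᶜ n0 hpos
  · -- isomorphism with the free algebra
    have hW : ∀ w ∈ W, ∃ j ∈ Tᶜ, j ∈ w := by
      intro w hw
      by_contra hcon
      push_neg at hcon
      have hsel : SelectsFrom (Cmax hmax) n0 w := by
        intro k hk
        have h1 : w.get ⟨k, hk⟩ ∈ T := by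
          by_contra hc
          exact hcon (w.get ⟨k, hk⟩) hc (List.get_mem w ⟨k, hk⟩)
        rw [hn0 (n0 + k) (by omega)]
        exact h1
      exact (Cmax_tree hmax).2 n0 w hsel (mono_mem_zero F W hw)
    exact iso Tᶜ hW
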